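/- Let N ≥ 3, α > 0, 0 < μ < 2. The mass function M(ω) = N (μ+1)^{1/μ}/μ · ω^{1/μ - 1/2} · ∫_{α/(N√ω)}^{1} (1-t²)^{1/μ-1} dt is strictly monotonically increasing on (α²/N², +∞), tends to 0 as ω → (α²/N²)⁺, and tends to +∞ as ω → +∞. -/

import Mathlib

open Real Filter MeasureTheory

/-- The mass of the symmetric stationary state of frequency `ω` on the `N`-star graph with
attractive delta of strength `α` at the vertex. -/
noncomputable def massFn (N : ℕ) (α μ : ℝ) (ω : ℝ) : ℝ :=
  N * (μ + 1) ^ (1 / μ) / μ * ω ^ (1 / μ - 1 / 2) *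
    ∫ t in (α / (N * Real.sqrt ω))..1, (1 - t ^ 2) ^ (1 / μ - 1)

lemma aux_integrable {q : ℝ} (hq : -1 < q) :
    IntervalIntegrable (fun t : ℝ => (1 - t ^ 2) ^ q) volume 0 1 := by
  have h1 : IntervalIntegrable (fun t : ℝ => (1 - t) ^ q) volume 0 1 := by
    have := (intervalIntegral.intervalIntegrable_rpow' (r := q) (a := 0) (b := 1) hq).comp_sub_left 1
    simpa using this.symm
  have h2 : ContinuousOn (fun t : ℝ => (1 + t) ^ q) (Set.uIcc (0:ℝ) 1) := by
    intro t ht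
    rw [Set.uIcc_of_le (by norm_num : (0:ℝ) ≤ 1)] at ht
    exact ((Real.continuousAt_rpow_const (1 + t) q
      (Or.inl (by nlinarith [ht.1]))).comp
      ((continuous_const.add continuous_id).continuousAt)).continuousWithinAt
  have h3 := h1.mul_continuousOn h2
  apply h3.congr
  intro t ht
  show (1 - t) ^ q * (1 + t) ^ q = (1 - t ^ 2) ^ q
  rw [Set.uIoc_of_le (by norm_num : (0:ℝ) ≤ 1)] at ht
  rw [← Real.mul_rpow (by linarith [ht.2]) (by linarith [ht.1])]
  congr 1
  ring

theorem massFn_strictMono_and_limits (N : ℕ) (hN : 3 ≤ N) (α μ : ℝ)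
    (hα : 0 < α) (hμ : 0 < μ) (hμ2 : μ < 2) :
    StrictMonoOn (massFn N α μ) (Set.Ioi (α ^ 2 / N ^ 2)) ∧
    Tendsto (massFn N α μ) (nhdsWithin (α ^ 2 / N ^ 2) (Set.Ioi (α ^ 2 / N ^ 2))) (nhds 0) ∧
    Tendsto (massFn N α μ) atTop atTop := by
  have hNR : (3:ℝ) ≤ N := by exact_mod_cast hN
  have hN0 : (0:ℝ) < N := by linarith
  have hμ1 : 1 / 2 < 1 / μ := by
    rw [lt_div_iff₀ hμ]; linarith
  set q : ℝ := 1 / μ - 1 with hqdef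
  set p : ℝ := 1 / μ - 1 / 2 with hpdef
  have hq : -1 < q := by rw [hqdef]; linarith
  have hp : 0 < p := by rw [hpdef]; linarith
  set C : ℝ := N * (μ + 1) ^ (1 / μ) / μ with hCdef
  have hC : 0 < C := by
    apply div_pos _ hμ
    exact mul_pos hN0 (Real.rpow_pos_of_pos (by linarith) _)
  set f : ℝ → ℝ := fun t => (1 - t ^ 2) ^ q with hfdef
  set F : ℝ → ℝ := fun x => ∫ t in x..1, f t with hFdef
  set x : ℝ → ℝ := fun ω => α / (N * Real.sqrt ω) with hxdef
  set ω₀ : ℝ := α ^ 2 / N ^ 2 with hω₀def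
  have hω₀ : 0 < ω₀ := by positivity
  have hω₀' : ω₀ = (α / N) ^ 2 := by rw [hω₀def, div_pow]
  have hmass : ∀ ω, massFn N α μ ω = C * ω ^ p * F (x ω) := fun ω => rfl
  -- integrability on subintervals of [0,1]
  have hint : ∀ u v : ℝ, u ∈ Set.Icc (0:ℝ) 1 → v ∈ Set.Icc (0:ℝ) 1 →
      IntervalIntegrable f volume u v := by
    intro u v hu hv
    apply (aux_integrable hq).mono_set
    exact Set.uIcc_subset_uIcc (by rwa [Set.uIcc_of_le (by norm_num : (0:ℝ) ≤ 1)])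
      (by rwa [Set.uIcc_of_le (by norm_num : (0:ℝ) ≤ 1)])
  -- positivity of F
  have hFpos : ∀ u : ℝ, 0 ≤ u → u < 1 → 0 < F u := by
    intro u hu hu1
    apply intervalIntegral.intervalIntegral_pos_of_pos_on
      (hint u 1 ⟨hu, hu1.le⟩ ⟨by norm_num, le_refl _⟩)
    · intro t ht
      apply Real.rpow_pos_of_pos
      nlinarith [ht.1, ht.2]
    · exact hu1
  -- antitonicity of F on [0,1]
  have hFanti : ∀ u v : ℝ, 0 ≤ u → u ≤ v → v ≤ 1 → F v ≤ F u := by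
    intro u v hu huv hv1
    have hu1 : u ≤ 1 := huv.trans hv1
    have hadd := intervalIntegral.integral_add_adjacent_intervals
      (hint u v ⟨hu, hu1⟩ ⟨hu.trans huv, hv1⟩)
      (hint v 1 ⟨hu.trans huv, hv1⟩ ⟨by norm_num, le_refl _⟩)
    have hnn : 0 ≤ ∫ t in u..v, f t := by
      apply intervalIntegral.integral_nonneg huv
      intro s hs
      apply Real.rpow_nonneg
      nlinarith [hs.1, hs.2, hu, hv1]
    have : F u = (∫ t in u..v, f t) + F v := by rw [hFdef]; exact hadd.symm
    linarith
  -- x maps Ioi ω₀ to Ioo 0 1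
  have hxmem : ∀ ω, ω₀ < ω → x ω ∈ Set.Ioo (0:ℝ) 1 := by
    intro ω hω
    have hωpos : 0 < ω := hω₀.trans hω
    have hs : 0 < Real.sqrt ω := Real.sqrt_pos.mpr hωpos
    have hlt : α / N < Real.sqrt ω := by
      rw [show α / N = Real.sqrt ((α/N)^2) from
        (Real.sqrt_sq (by positivity)).symm]
      exact Real.sqrt_lt_sqrt (by positivity) (by rw [← hω₀']; exact hω)
    constructor
    · rw [hxdef]; exact div_pos hα (mul_pos hN0 hs)
    · rw [hxdef]
      rw [div_lt_one (mul_pos hN0 hs)]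
      calc α = N * (α / N) := by field_simp
      _ < N * Real.sqrt ω := by
          exact mul_lt_mul_of_pos_left hlt hN0
  -- x is strictly antitone on Ioi ω₀
  have hxanti : ∀ ω₁ ω₂, ω₀ < ω₁ → ω₁ < ω₂ → x ω₂ < x ω₁ := by
    intro ω₁ ω₂ h₁ h₂
    have h1p : 0 < ω₁ := hω₀.trans h₁
    have hs1 : 0 < Real.sqrt ω₁ := Real.sqrt_pos.mpr h1p
    have : Real.sqrt ω₁ < Real.sqrt ω₂ := Real.sqrt_lt_sqrt h1p.le h₂
    exact div_lt_div_of_pos_left hα (by positivity) (by nlinarith)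
  refine ⟨?_, ?_, ?_⟩
  · -- strict monotonicity
    intro ω₁ h₁ ω₂ h₂ h12
    simp only [Set.mem_Ioi] at h₁ h₂
    rw [hmass, hmass]
    have hx₁ := hxmem ω₁ h₁
    have hx₂ := hxmem ω₂ h₂
    have hF1 : 0 < F (x ω₁) := hFpos _ hx₁.1.le hx₁.2
    have hF12 : F (x ω₁) ≤ F (x ω₂) := hFanti _ _ hx₂.1.le (hxanti ω₁ ω₂ h₁ h12).le hx₁.2.le
    have hrp : C * ω₁ ^ p < C * ω₂ ^ p :=
      mul_lt_mul_of_pos_left (Real.rpow_lt_rpow (hω₀.trans h₁).le h12 hp) hC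
    exact mul_lt_mul hrp hF12 hF1 (mul_pos hC (Real.rpow_pos_of_pos (hω₀.trans h₂) p)).le
  · -- limit at ω₀⁺ is 0
    have hFcont : ContinuousOn F (Set.Icc (0:ℝ) 1) := by
      have h := intervalIntegral.continuousOn_primitive_interval_left
        (f := f) (μ := volume) (a := 0) (b := 1)
        (by rw [← intervalIntegrable_iff']; exact aux_integrable hq)
      rwa [Set.uIcc_of_le (by norm_num : (0:ℝ) ≤ 1)] at h
    have hF1 : F 1 = 0 := intervalIntegral.integral_same
    have hsq : Real.sqrt ω₀ = α / N := by
      rw [hω₀', Real.sqrt_sq (by positivity)]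
    have hx0 : x ω₀ = 1 := by
      rw [hxdef]
      simp only [hsq]
      field_simp
    have hxt : Tendsto x (nhdsWithin ω₀ (Set.Ioi ω₀)) (nhdsWithin 1 (Set.Icc 0 1)) := by
      rw [tendsto_nhdsWithin_iff]
      constructor
      · have hc : ContinuousAt x ω₀ := by
          apply ContinuousAt.div continuousAt_const
          · exact (continuous_const.mul Real.continuous_sqrt).continuousAt
          · rw [hsq]; positivity
        have := hc.continuousWithinAt (s := Set.Ioi ω₀)
        rw [ContinuousWithinAt, hx0] at this
        exact this
      · filter_upwards [self_mem_nhdsWithin] with ω hω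
        exact Set.mem_Icc_of_Ioo (hxmem ω hω)
    have hFt : Tendsto F (nhdsWithin 1 (Set.Icc 0 1)) (nhds 0) := by
      have := hFcont 1 ⟨by norm_num, le_refl _⟩
      rw [ContinuousWithinAt, hF1] at this
      exact this
    have hrt : Tendsto (fun ω => C * ω ^ p) (nhdsWithin ω₀ (Set.Ioi ω₀)) (nhds (C * ω₀ ^ p)) := by
      apply Tendsto.mono_left _ nhdsWithin_le_nhds
      exact (Real.continuousAt_rpow_const ω₀ p (Or.inl hω₀.ne')).const_mul C
    have := hrt.mul (hFt.comp hxt)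
    rw [mul_zero] at this
    refine this.congr fun ω => ?_
    rw [hmass]
    rfl
  · -- limit at +∞
    have hF2 : 0 < F (1/2) := hFpos _ (by norm_num) (by norm_num)
    have hgrow : Tendsto (fun ω : ℝ => C * F (1/2) * ω ^ p) atTop atTop :=
      (tendsto_rpow_atTop hp).const_mul_atTop (by positivity)
    apply tendsto_atTop_mono' atTop _ hgrow
    filter_upwards [eventually_ge_atTop ((2 * α / N) ^ 2), eventually_ge_atTop 1]
      with ω hω1 hω2
    have hωpos : (0:ℝ) < ω := by linarith
    have hs : 0 < Real.sqrt ω := Real.sqrt_pos.mpr hωpos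
    have hsge : 2 * α / N ≤ Real.sqrt ω := by
      rw [show 2 * α / N = Real.sqrt ((2 * α / N)^2) from
        (Real.sqrt_sq (by positivity)).symm]
      exact Real.sqrt_le_sqrt hω1
    have hxle : x ω ≤ 1 / 2 := by
      rw [hxdef]
      have h2a : 0 < 2 * α := by linarith
      have : N * (2 * α / N) ≤ N * Real.sqrt ω := mul_le_mul_of_nonneg_left hsge hN0.le
      have hden : 2 * α ≤ N * Real.sqrt ω := by
        rwa [mul_div_cancel₀ _ hN0.ne'] at this
      calc α / (N * Real.sqrt ω) ≤ α / (2 * α) :=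
            div_le_div_of_nonneg_left hα.le h2a hden
        _ = 1 / 2 := by field_simp
    have hxnn : 0 ≤ x ω := by rw [hxdef]; positivity
    have hFge : F (1/2) ≤ F (x ω) := hFanti _ _ hxnn hxle (by norm_num)
    rw [hmass]
    calc C * F (1/2) * ω ^ p = C * ω ^ p * F (1/2) := by ring
      _ ≤ C * ω ^ p * F (x ω) := by
          apply mul_le_mul_of_nonneg_left hFge
          positivity
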